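/- Fix T ∈ ℝ, R > 0 and let ξ(θ,φ) = (T, R sinθ cosφ, R sinθ sinφ, R cosθ), with β₀ = (1,0,0,0), β₁ = (0, sinθ cosφ, sinθ sinφ, cosθ), β₂ = ∂_θξ, β₃ = ∂_φξ. Let ψ⁰, ψ¹, ψ², ψ³ : (0,π)×ℝ → ℝ be smooth, set F_ε = ξ + ε·(ψ⁰β₀ + ψ¹β₁ + ψ²β₂ + ψ³β₃), and let H(ε) = s^{AB}(ε)(∂_A∂_BF_ε − Γ^C_{AB}(ε)∂_CF_ε) be the curvature vector of F_ε, where s_{AB}(ε) = η(∂_AF_ε, ∂_BF_ε). Then the time component of the curvature vector satisfies, at every (θ,φ) ∈ (0,π)×ℝ, d/dε|_{ε=0} H⁰(ε)(θ,φ) = (1/R²)·Δ̊ψ⁰(θ,φ), where Δ̊u = ∂²_θ u + cotθ·∂_θ u + sin⁻²θ·∂²_φ u. -/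

import Mathlib

open Real

noncomputable section

/-- The Minkowski bilinear form on `ℝ⁴`: `η(v,w) = -v⁰w⁰ + v¹w¹ + v²w² + v³w³`. -/
def mink (v w : Fin 4 → ℝ) : ℝ :=
  -(v 0 * w 0) + v 1 * w 1 + v 2 * w 2 + v 3 * w 3

/-- Partial derivative `∂_A` with respect to the spherical coordinates `(θ,φ)`:
`A = 0` is `∂_θ`, `A = 1` is `∂_φ`. -/
def pd {X : Type*} [NormedAddCommGroup X] [NormedSpace ℝ X]
    (A : Fin 2) (f : ℝ → ℝ → X) (θ φ : ℝ) : X :=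
  if A = 0 then deriv (fun t => f t φ) θ else deriv (fun p => f θ p) φ

/-- The standard parametrization `ξ(θ,φ) = (T, R sinθ cosφ, R sinθ sinφ, R cosθ)`
of the round sphere `S_{T,R}` in Minkowski spacetime. -/
def xi (T R : ℝ) (θ φ : ℝ) : Fin 4 → ℝ :=
  ![T, R * sin θ * cos φ, R * sin θ * sin φ, R * cos θ]

/-- The ambient basis field `β₀ = (1,0,0,0)`. -/
def beta0 : Fin 4 → ℝ := ![1, 0, 0, 0]

/-- The ambient basis field `β₁ = (0, sinθ cosφ, sinθ sinφ, cosθ)`. -/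
def beta1 (θ φ : ℝ) : Fin 4 → ℝ := ![0, sin θ * cos φ, sin θ * sin φ, cos θ]

/-- The perturbed embedding `F_ε = ξ + ε (ψ⁰β₀ + ψ¹β₁ + ψ²β₂ + ψ³β₃)`,
where `β₂ = ∂_θ ξ` and `β₃ = ∂_φ ξ`. -/
def Fpert (T R : ℝ) (ψ : Fin 4 → ℝ → ℝ → ℝ) (ε : ℝ) (θ φ : ℝ) : Fin 4 → ℝ :=
  xi T R θ φ + ε • (ψ 0 θ φ • beta0 + ψ 1 θ φ • beta1 θ φ
    + ψ 2 θ φ • pd 0 (xi T R) θ φ + ψ 3 θ φ • pd 1 (xi T R) θ φ)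

/-- The induced metric `s_{AB} = η(∂_A F, ∂_B F)` of a parametrized surface `F`. -/
def met (F : ℝ → ℝ → Fin 4 → ℝ) (A B : Fin 2) (θ φ : ℝ) : ℝ :=
  mink (pd A F θ φ) (pd B F θ φ)

/-- The inverse `s^{AB}` of the induced metric, as a `2×2` matrix. -/
def metInv (F : ℝ → ℝ → Fin 4 → ℝ) (θ φ : ℝ) : Matrix (Fin 2) (Fin 2) ℝ :=
  (Matrix.of fun A B => met F A B θ φ)⁻¹

/-- The Christoffel symbols
`Γ^C_{AB} = ½ s^{CD} (∂_A s_{DB} + ∂_B s_{AD} - ∂_D s_{AB})` of the induced metric. -/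
def christoffel (F : ℝ → ℝ → Fin 4 → ℝ) (C A B : Fin 2) (θ φ : ℝ) : ℝ :=
  (1 / 2) * ∑ D : Fin 2, metInv F θ φ C D *
    (pd A (met F D B) θ φ + pd B (met F A D) θ φ - pd D (met F A B) θ φ)

/-- The extrinsic curvature (mean curvature) vector
`H = s^{AB} (∂_A ∂_B F - Γ^C_{AB} ∂_C F)` of a parametrized surface `F`. -/
def curvVec (F : ℝ → ℝ → Fin 4 → ℝ) (θ φ : ℝ) : Fin 4 → ℝ :=
  ∑ A : Fin 2, ∑ B : Fin 2, metInv F θ φ A B •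
    (pd A (pd B F) θ φ - ∑ C : Fin 2, christoffel F C A B θ φ • pd C F θ φ)

/-- The Laplace–Beltrami operator of the standard round metric on `S²`:
`Δ̊u = ∂²_θ u + cotθ ∂_θ u + sin⁻²θ ∂²_φ u`. -/
def sphLap (u : ℝ → ℝ → ℝ) (θ φ : ℝ) : ℝ :=
  pd 0 (pd 0 u) θ φ + (cos θ / sin θ) * pd 0 u θ φ
    + (sin θ ^ 2)⁻¹ * pd 1 (pd 1 u) θ φ


lemma pd0_def {X : Type*} [NormedAddCommGroup X] [NormedSpace ℝ X]
    (f : ℝ → ℝ → X) (θ φ : ℝ) : pd 0 f θ φ = deriv (fun t => f t φ) θ := rfl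

lemma pd1_def {X : Type*} [NormedAddCommGroup X] [NormedSpace ℝ X]
    (f : ℝ → ℝ → X) (θ φ : ℝ) : pd 1 f θ φ = deriv (fun p => f θ p) φ := rfl

def Sm (f : ℝ → ℝ → ℝ) : Prop := ContDiff ℝ (⊤ : ℕ∞) (fun p : ℝ × ℝ => f p.1 p.2)

lemma Sm.diffAt0 {f : ℝ → ℝ → ℝ} (hf : Sm f) (θ φ : ℝ) :
    DifferentiableAt ℝ (fun t => f t φ) θ :=
  by have h1 : DifferentiableAt ℝ (fun p : ℝ × ℝ => f p.1 p.2) (θ, φ) := (hf.differentiable (by simp)) (θ, φ); have h := h1.comp (f := fun t : ℝ => (t, φ)) θ ((differentiableAt_fun_id (x := θ)).prodMk (differentiableAt_const (c := φ))); exact h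

lemma Sm.diffAt1 {f : ℝ → ℝ → ℝ} (hf : Sm f) (θ φ : ℝ) :
    DifferentiableAt ℝ (fun p => f θ p) φ :=
  by have h := ((hf.differentiable (by simp)) (θ, φ)).comp φ ((differentiableAt_const (c := θ)).prodMk differentiableAt_id); exact h

lemma Sm.hasDerivAt0 {f : ℝ → ℝ → ℝ} (hf : Sm f) (θ φ : ℝ) :
    HasDerivAt (fun t => f t φ) (pd 0 f θ φ) θ := by
  rw [pd0_def]; exact (hf.diffAt0 θ φ).hasDerivAt

lemma Sm.hasDerivAt1 {f : ℝ → ℝ → ℝ} (hf : Sm f) (θ φ : ℝ) :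
    HasDerivAt (fun p => f θ p) (pd 1 f θ φ) φ := by
  rw [pd1_def]; exact (hf.diffAt1 θ φ).hasDerivAt

lemma Sm.pd0 {f : ℝ → ℝ → ℝ} (hf : Sm f) : Sm (pd 0 f) := by
  have key : ∀ θ φ : ℝ, pd 0 f θ φ = fderiv ℝ (fun p : ℝ × ℝ => f p.1 p.2) (θ, φ) (1, 0) := by
    intro θ φ
    have h1 : HasDerivAt (fun t => f t φ) (fderiv ℝ (fun p : ℝ × ℝ => f p.1 p.2) (θ, φ) (1, 0)) θ :=
      by have h := ((hf.differentiable (by simp) (θ, φ)).hasFDerivAt).comp_hasDerivAt θ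
          ((hasDerivAt_id θ).prodMk (hasDerivAt_const θ φ)); exact h
    rw [pd0_def]; exact h1.deriv
  have : (fun p : ℝ × ℝ => pd 0 f p.1 p.2)
      = fun p => (fderiv ℝ (fun p : ℝ × ℝ => f p.1 p.2) p) (1, 0) :=
    funext fun p => key p.1 p.2
  rw [Sm, this]
  exact (hf.fderiv_right (by simp)).clm_apply contDiff_const

lemma Sm.pd1 {f : ℝ → ℝ → ℝ} (hf : Sm f) : Sm (pd 1 f) := by
  have key : ∀ θ φ : ℝ, pd 1 f θ φ = fderiv ℝ (fun p : ℝ × ℝ => f p.1 p.2) (θ, φ) (0, 1) := by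
    intro θ φ
    have h1 : HasDerivAt (fun p => f θ p) (fderiv ℝ (fun p : ℝ × ℝ => f p.1 p.2) (θ, φ) (0, 1)) φ :=
      by have h := ((hf.differentiable (by simp) (θ, φ)).hasFDerivAt).comp_hasDerivAt φ
          ((hasDerivAt_const φ θ).prodMk (hasDerivAt_id φ)); exact h
    rw [pd1_def]; exact h1.deriv
  have : (fun p : ℝ × ℝ => pd 1 f p.1 p.2)
      = fun p => (fderiv ℝ (fun p : ℝ × ℝ => f p.1 p.2) p) (0, 1) :=
    funext fun p => key p.1 p.2
  rw [Sm, this]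
  exact (hf.fderiv_right (by simp)).clm_apply contDiff_const

lemma Sm.add {f g : ℝ → ℝ → ℝ} (hf : Sm f) (hg : Sm g) : Sm (fun a b => f a b + g a b) :=
  ContDiff.add hf hg

lemma Sm.mul {f g : ℝ → ℝ → ℝ} (hf : Sm f) (hg : Sm g) : Sm (fun a b => f a b * g a b) :=
  ContDiff.mul hf hg

lemma Sm.neg {f : ℝ → ℝ → ℝ} (hf : Sm f) : Sm (fun a b => -(f a b)) := ContDiff.neg hf

lemma sm_const (c : ℝ) : Sm (fun _ _ => c) := contDiff_const

lemma sm_sin1 : Sm (fun a _ => sin a) := Real.contDiff_sin.comp contDiff_fst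
lemma sm_cos1 : Sm (fun a _ => cos a) := Real.contDiff_cos.comp contDiff_fst
lemma sm_sin2 : Sm (fun _ b => sin b) := Real.contDiff_sin.comp contDiff_snd
lemma sm_cos2 : Sm (fun _ b => cos b) := Real.contDiff_cos.comp contDiff_snd

lemma Sm.congr {f g : ℝ → ℝ → ℝ} (hg : Sm g) (h : ∀ a b, f a b = g a b) : Sm f := by
  have : f = g := funext fun a => funext fun b => h a b
  rw [Sm, this]; exact hg

lemma pd0_pi {f : ℝ → ℝ → Fin 4 → ℝ} {g : Fin 4 → ℝ} {θ φ : ℝ}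
    (h : ∀ i, HasDerivAt (fun t => f t φ i) (g i) θ) : pd 0 f θ φ = g := by
  rw [pd0_def]; exact (hasDerivAt_pi.2 h).deriv

lemma pd1_pi {f : ℝ → ℝ → Fin 4 → ℝ} {g : Fin 4 → ℝ} {θ φ : ℝ}
    (h : ∀ i, HasDerivAt (fun p => f θ p i) (g i) φ) : pd 1 f θ φ = g := by
  rw [pd1_def]; exact (hasDerivAt_pi.2 h).deriv

lemma pd_congr {X : Type*} [NormedAddCommGroup X] [NormedSpace ℝ X]
    {f g : ℝ → ℝ → X} (A : Fin 2) (θ φ : ℝ) (h : ∀ a b, f a b = g a b) :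
    pd A f θ φ = pd A g θ φ := by
  have : f = g := funext fun a => funext fun b => h a b
  rw [this]

lemma pd_const {X : Type*} [NormedAddCommGroup X] [NormedSpace ℝ X]
    (A : Fin 2) (θ φ : ℝ) (c : X) : pd A (fun _ _ => c) θ φ = 0 := by
  fin_cases A <;> simp [pd]

lemma sm_mink {p q : Fin 4 → ℝ → ℝ → ℝ} (hp : ∀ i, Sm (p i)) (hq : ∀ i, Sm (q i)) :
    Sm (fun θ φ => mink (fun i => p i θ φ) (fun i => q i θ φ)) := by
  simp only [mink]
  exact ((((hp 0).mul (hq 0)).neg.add ((hp 1).mul (hq 1))).add ((hp 2).mul (hq 2))).add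
    ((hp 3).mul (hq 3))

lemma hxi0 (T R θ φ : ℝ) : ∀ i, HasDerivAt (fun t => xi T R t φ i)
    (![0, R * cos θ * cos φ, R * cos θ * sin φ, R * -sin θ] i) θ := by
  intro i
  fin_cases i
  · simpa [xi] using hasDerivAt_const θ T
  · simpa [xi] using ((hasDerivAt_sin θ).const_mul R).mul_const (cos φ)
  · simpa [xi] using ((hasDerivAt_sin θ).const_mul R).mul_const (sin φ)
  · simpa [xi] using (hasDerivAt_cos θ).const_mul R

lemma hxi1 (T R θ φ : ℝ) : ∀ i, HasDerivAt (fun p => xi T R θ p i)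
    (![0, R * sin θ * -sin φ, R * sin θ * cos φ, 0] i) φ := by
  intro i
  fin_cases i
  · simpa [xi] using hasDerivAt_const φ T
  · simpa [xi] using (hasDerivAt_cos φ).const_mul (R * sin θ)
  · simpa [xi] using (hasDerivAt_sin φ).const_mul (R * sin θ)
  · simpa [xi] using hasDerivAt_const φ (R * cos θ)

lemma pdxi0 (T R θ φ : ℝ) :
    pd 0 (xi T R) θ φ = ![0, R * cos θ * cos φ, R * cos θ * sin φ, R * -sin θ] :=
  pd0_pi (hxi0 T R θ φ)

lemma pdxi1 (T R θ φ : ℝ) :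
    pd 1 (xi T R) θ φ = ![0, R * sin θ * -sin φ, R * sin θ * cos φ, 0] :=
  pd1_pi (hxi1 T R θ φ)

def Vc (T R : ℝ) (ψ : Fin 4 → ℝ → ℝ → ℝ) (i : Fin 4) (θ φ : ℝ) : ℝ :=
  (ψ 0 θ φ • beta0 + ψ 1 θ φ • beta1 θ φ
    + ψ 2 θ φ • pd 0 (xi T R) θ φ + ψ 3 θ φ • pd 1 (xi T R) θ φ) i

lemma Fpert_apply (T R : ℝ) (ψ : Fin 4 → ℝ → ℝ → ℝ) (ε θ φ : ℝ) (i : Fin 4) :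
    Fpert T R ψ ε θ φ i = xi T R θ φ i + ε * Vc T R ψ i θ φ := rfl

lemma Vc0 (T R : ℝ) (ψ : Fin 4 → ℝ → ℝ → ℝ) (θ φ : ℝ) :
    Vc T R ψ 0 θ φ = ψ 0 θ φ := by
  simp [Vc, beta0, beta1, pdxi0, pdxi1]

lemma Vc1 (T R : ℝ) (ψ : Fin 4 → ℝ → ℝ → ℝ) (θ φ : ℝ) :
    Vc T R ψ 1 θ φ = ψ 1 θ φ * (sin θ * cos φ) + ψ 2 θ φ * (R * cos θ * cos φ)
      + ψ 3 θ φ * (R * sin θ * -sin φ) := by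
  simp [Vc, beta0, beta1, pdxi0, pdxi1]

lemma Vc2 (T R : ℝ) (ψ : Fin 4 → ℝ → ℝ → ℝ) (θ φ : ℝ) :
    Vc T R ψ 2 θ φ = ψ 1 θ φ * (sin θ * sin φ) + ψ 2 θ φ * (R * cos θ * sin φ)
      + ψ 3 θ φ * (R * sin θ * cos φ) := by
  simp [Vc, beta0, beta1, pdxi0, pdxi1]

lemma Vc3 (T R : ℝ) (ψ : Fin 4 → ℝ → ℝ → ℝ) (θ φ : ℝ) :
    Vc T R ψ 3 θ φ = ψ 1 θ φ * cos θ + ψ 2 θ φ * (R * -sin θ) := by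
  simp [Vc, beta0, beta1, pdxi0, pdxi1]

lemma smXi (T R : ℝ) (i : Fin 4) : Sm (fun θ φ => xi T R θ φ i) := by
  fin_cases i
  · exact Sm.congr (sm_const T) (fun a b => by simp [xi])
  · exact Sm.congr (((sm_const R).mul sm_sin1).mul sm_cos2) (fun a b => by simp [xi])
  · exact Sm.congr (((sm_const R).mul sm_sin1).mul sm_sin2) (fun a b => by simp [xi])
  · exact Sm.congr ((sm_const R).mul sm_cos1) (fun a b => by simp [xi])

lemma smVc (T R : ℝ) (ψ : Fin 4 → ℝ → ℝ → ℝ) (hψ : ∀ α, Sm (ψ α)) (i : Fin 4) :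
    Sm (Vc T R ψ i) := by
  fin_cases i
  · exact Sm.congr (hψ 0) (Vc0 T R ψ)
  · exact Sm.congr ((((hψ 1).mul (sm_sin1.mul sm_cos2)).add
      ((hψ 2).mul (((sm_const R).mul sm_cos1).mul sm_cos2))).add
      ((hψ 3).mul (((sm_const R).mul sm_sin1).mul sm_sin2.neg))) (Vc1 T R ψ)
  · exact Sm.congr ((((hψ 1).mul (sm_sin1.mul sm_sin2)).add
      ((hψ 2).mul (((sm_const R).mul sm_cos1).mul sm_sin2))).add
      ((hψ 3).mul (((sm_const R).mul sm_sin1).mul sm_cos2))) (Vc2 T R ψ)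
  · exact Sm.congr (((hψ 1).mul sm_cos1).add
      ((hψ 2).mul ((sm_const R).mul sm_sin1.neg))) (Vc3 T R ψ)

def Xf (T R : ℝ) (A : Fin 2) (i : Fin 4) : ℝ → ℝ → ℝ :=
  pd A (fun θ φ => xi T R θ φ i)

def Wf (T R : ℝ) (ψ : Fin 4 → ℝ → ℝ → ℝ) (A : Fin 2) (i : Fin 4) : ℝ → ℝ → ℝ :=
  pd A (Vc T R ψ i)

lemma smXf (T R : ℝ) (A : Fin 2) (i : Fin 4) : Sm (Xf T R A i) := by
  fin_cases A
  · exact (smXi T R i).pd0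
  · exact (smXi T R i).pd1

lemma smWf (T R : ℝ) (ψ : Fin 4 → ℝ → ℝ → ℝ) (hψ : ∀ α, Sm (ψ α)) (A : Fin 2) (i : Fin 4) :
    Sm (Wf T R ψ A i) := by
  fin_cases A
  · exact (smVc T R ψ hψ i).pd0
  · exact (smVc T R ψ hψ i).pd1

lemma Xf0_val (T R : ℝ) (i : Fin 4) (θ φ : ℝ) :
    Xf T R 0 i θ φ = ![0, R * cos θ * cos φ, R * cos θ * sin φ, R * -sin θ] i :=
  (hxi0 T R θ φ i).deriv

lemma Xf1_val (T R : ℝ) (i : Fin 4) (θ φ : ℝ) :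
    Xf T R 1 i θ φ = ![0, R * sin θ * -sin φ, R * sin θ * cos φ, 0] i :=
  (hxi1 T R θ φ i).deriv

lemma Xf_time (T R : ℝ) (A : Fin 2) (θ φ : ℝ) : Xf T R A 0 θ φ = 0 := by
  have h : Xf T R A 0 θ φ = pd A (fun _ _ => T) θ φ :=
    pd_congr A θ φ (fun a b => by simp [xi])
  rw [h, pd_const]

lemma Wf_time (T R : ℝ) (ψ : Fin 4 → ℝ → ℝ → ℝ) (A : Fin 2) (θ φ : ℝ) :
    Wf T R ψ A 0 θ φ = pd A (ψ 0) θ φ :=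
  pd_congr A θ φ (Vc0 T R ψ)

def af (T R : ℝ) (A B : Fin 2) (θ φ : ℝ) : ℝ :=
  mink (fun i => Xf T R A i θ φ) (fun i => Xf T R B i θ φ)

def bf (T R : ℝ) (ψ : Fin 4 → ℝ → ℝ → ℝ) (A B : Fin 2) (θ φ : ℝ) : ℝ :=
  mink (fun i => Xf T R A i θ φ) (fun i => Wf T R ψ B i θ φ)
    + mink (fun i => Wf T R ψ A i θ φ) (fun i => Xf T R B i θ φ)

def cf (T R : ℝ) (ψ : Fin 4 → ℝ → ℝ → ℝ) (A B : Fin 2) (θ φ : ℝ) : ℝ :=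
  mink (fun i => Wf T R ψ A i θ φ) (fun i => Wf T R ψ B i θ φ)

lemma smaf (T R : ℝ) (A B : Fin 2) : Sm (af T R A B) :=
  sm_mink (fun i => smXf T R A i) (fun i => smXf T R B i)

lemma smbf (T R : ℝ) (ψ : Fin 4 → ℝ → ℝ → ℝ) (hψ : ∀ α, Sm (ψ α)) (A B : Fin 2) :
    Sm (bf T R ψ A B) :=
  (sm_mink (fun i => smXf T R A i) (fun i => smWf T R ψ hψ B i)).add
    (sm_mink (fun i => smWf T R ψ hψ A i) (fun i => smXf T R B i))

lemma smcf (T R : ℝ) (ψ : Fin 4 → ℝ → ℝ → ℝ) (hψ : ∀ α, Sm (ψ α)) (A B : Fin 2) :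
    Sm (cf T R ψ A B) :=
  sm_mink (fun i => smWf T R ψ hψ A i) (fun i => smWf T R ψ hψ B i)

lemma pdF (T R : ℝ) (ψ : Fin 4 → ℝ → ℝ → ℝ) (hψ : ∀ α, Sm (ψ α)) (A : Fin 2) (ε θ φ : ℝ) :
    pd A (Fpert T R ψ ε) θ φ = fun i => Xf T R A i θ φ + ε * Wf T R ψ A i θ φ := by
  fin_cases A
  · apply pd0_pi
    intro i
    have h := ((smXi T R i).hasDerivAt0 θ φ).add
      (((smVc T R ψ hψ i).hasDerivAt0 θ φ).const_mul ε)
    simp only [Fpert_apply]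
    exact h
  · apply pd1_pi
    intro i
    have h := ((smXi T R i).hasDerivAt1 θ φ).add
      (((smVc T R ψ hψ i).hasDerivAt1 θ φ).const_mul ε)
    simp only [Fpert_apply]
    exact h

lemma met_poly (T R : ℝ) (ψ : Fin 4 → ℝ → ℝ → ℝ) (hψ : ∀ α, Sm (ψ α)) (A B : Fin 2)
    (ε θ φ : ℝ) :
    met (Fpert T R ψ ε) A B θ φ
      = af T R A B θ φ + ε * bf T R ψ A B θ φ + ε ^ 2 * cf T R ψ A B θ φ := by
  simp only [met, pdF T R ψ hψ, mink, af, bf, cf]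
  ring

lemma pd_met (T R : ℝ) (ψ : Fin 4 → ℝ → ℝ → ℝ) (hψ : ∀ α, Sm (ψ α)) (C A B : Fin 2)
    (ε θ φ : ℝ) :
    pd C (met (Fpert T R ψ ε) A B) θ φ
      = pd C (af T R A B) θ φ + ε * pd C (bf T R ψ A B) θ φ
        + ε ^ 2 * pd C (cf T R ψ A B) θ φ := by
  have hC : C = 0 ∨ C = 1 := by omega
  rcases hC with rfl | rfl
  . have h := (((smaf T R A B).hasDerivAt0 θ φ).add
      (((smbf T R ψ hψ A B).hasDerivAt0 θ φ).const_mul ε)).add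
      (((smcf T R ψ hψ A B).hasDerivAt0 θ φ).const_mul (ε ^ 2))
    rw [pd0_def, show (fun t => met (Fpert T R ψ ε) A B t φ)
        = (fun t => af T R A B t φ + ε * bf T R ψ A B t φ + ε ^ 2 * cf T R ψ A B t φ)
      from funext fun t => met_poly T R ψ hψ A B ε t φ]
    exact h.deriv
  . have h := (((smaf T R A B).hasDerivAt1 θ φ).add
      (((smbf T R ψ hψ A B).hasDerivAt1 θ φ).const_mul ε)).add
      (((smcf T R ψ hψ A B).hasDerivAt1 θ φ).const_mul (ε ^ 2))
    rw [pd1_def, show (fun p => met (Fpert T R ψ ε) A B θ p)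
        = (fun p => af T R A B θ p + ε * bf T R ψ A B θ p + ε ^ 2 * cf T R ψ A B θ p)
      from funext fun p => met_poly T R ψ hψ A B ε θ p]
    exact h.deriv

lemma af00 (T R θ φ : ℝ) : af T R 0 0 θ φ = R ^ 2 := by
  simp only [af, mink, Xf0_val, Matrix.cons_val_zero, Matrix.cons_val_one, Matrix.head_cons,
    Matrix.cons_val_two, Matrix.cons_val_three, Matrix.tail_cons]
  have h1 := sin_sq_add_cos_sq θ
  have h2 := sin_sq_add_cos_sq φ
  linear_combination (R ^ 2 * cos θ ^ 2) * h2 + R ^ 2 * h1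

lemma af01 (T R θ φ : ℝ) : af T R 0 1 θ φ = 0 := by
  simp only [af, mink, Xf0_val, Xf1_val, Matrix.cons_val_zero, Matrix.cons_val_one,
    Matrix.head_cons, Matrix.cons_val_two, Matrix.cons_val_three, Matrix.tail_cons]
  ring

lemma af10 (T R θ φ : ℝ) : af T R 1 0 θ φ = 0 := by
  simp only [af, mink, Xf0_val, Xf1_val, Matrix.cons_val_zero, Matrix.cons_val_one,
    Matrix.head_cons, Matrix.cons_val_two, Matrix.cons_val_three, Matrix.tail_cons]
  ring

lemma af11 (T R θ φ : ℝ) : af T R 1 1 θ φ = R ^ 2 * sin θ ^ 2 := by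
  simp only [af, mink, Xf1_val, Matrix.cons_val_zero, Matrix.cons_val_one, Matrix.head_cons,
    Matrix.cons_val_two, Matrix.cons_val_three, Matrix.tail_cons]
  have h2 := sin_sq_add_cos_sq φ
  linear_combination (R ^ 2 * sin θ ^ 2) * h2

lemma pdaf00 (T R : ℝ) (C : Fin 2) (θ φ : ℝ) : pd C (af T R 0 0) θ φ = 0 := by
  rw [pd_congr C θ φ (fun a b => af00 T R a b), pd_const]

lemma pdaf01 (T R : ℝ) (C : Fin 2) (θ φ : ℝ) : pd C (af T R 0 1) θ φ = 0 := by
  rw [pd_congr C θ φ (fun a b => af01 T R a b), pd_const]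

lemma pdaf10 (T R : ℝ) (C : Fin 2) (θ φ : ℝ) : pd C (af T R 1 0) θ φ = 0 := by
  rw [pd_congr C θ φ (fun a b => af10 T R a b), pd_const]

lemma pdaf11 (T R θ φ : ℝ) : pd 0 (af T R 1 1) θ φ = 2 * R ^ 2 * (sin θ * cos θ) := by
  have h : HasDerivAt (fun t => R ^ 2 * sin t ^ 2) (2 * R ^ 2 * (sin θ * cos θ)) θ := by
    have h2 := ((hasDerivAt_sin θ).pow 2).const_mul (R ^ 2)
    refine h2.congr_deriv ?_
    push_cast
    ring
  rw [pd_congr 0 θ φ (fun a b => af11 T R a b), pd0_def]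
  exact h.deriv

lemma pdaf11' (T R θ φ : ℝ) : pd 1 (af T R 1 1) θ φ = 0 := by
  rw [pd_congr 1 θ φ (fun a b => af11 T R a b), pd1_def]
  exact deriv_const φ _

def gg (T R : ℝ) (ψ : Fin 4 → ℝ → ℝ → ℝ) (θ φ : ℝ) (ε : ℝ) : ℝ :=
  ∑ A : Fin 2, ∑ B : Fin 2, metInv (Fpert T R ψ ε) θ φ A B *
    (pd A (pd B (ψ 0)) θ φ - ∑ C : Fin 2, christoffel (Fpert T R ψ ε) C A B θ φ
      * pd C (ψ 0) θ φ)

lemma curv_fact (T R : ℝ) (ψ : Fin 4 → ℝ → ℝ → ℝ) (hψ : ∀ α, Sm (ψ α)) (θ φ ε : ℝ) :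
    curvVec (Fpert T R ψ ε) θ φ 0 = ε * gg T R ψ θ φ ε := by
  have hPdC : ∀ C : Fin 2, pd C (Fpert T R ψ ε) θ φ 0 = ε * pd C (ψ 0) θ φ := by
    intro C
    rw [pdF T R ψ hψ C ε θ φ]
    simp [Xf_time, Wf_time]
  have hPdPd : ∀ A B : Fin 2,
      pd A (pd B (Fpert T R ψ ε)) θ φ 0 = ε * pd A (pd B (ψ 0)) θ φ := by
    intro A B
    have h1 : pd A (pd B (Fpert T R ψ ε)) θ φ
        = pd A (fun a b => fun i => Xf T R B i a b + ε * Wf T R ψ B i a b) θ φ :=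
      pd_congr A θ φ (fun a b => pdF T R ψ hψ B ε a b)
    have h2 : pd A (fun a b => fun i => Xf T R B i a b + ε * Wf T R ψ B i a b) θ φ
        = fun i => pd A (Xf T R B i) θ φ + ε * pd A (Wf T R ψ B i) θ φ := by
      have hA : A = 0 ∨ A = 1 := by omega
      rcases hA with rfl | rfl
      · exact pd0_pi (fun i => ((smXf T R B i).hasDerivAt0 θ φ).add
          (((smWf T R ψ hψ B i).hasDerivAt0 θ φ).const_mul ε))
      · exact pd1_pi (fun i => ((smXf T R B i).hasDerivAt1 θ φ).add
          (((smWf T R ψ hψ B i).hasDerivAt1 θ φ).const_mul ε))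
    have h3 : pd A (Xf T R B 0) θ φ = 0 := by
      rw [pd_congr A θ φ (fun a b => Xf_time T R B a b), pd_const]
    have h4 : pd A (Wf T R ψ B 0) θ φ = pd A (pd B (ψ 0)) θ φ :=
      pd_congr A θ φ (fun a b => Wf_time T R ψ B a b)
    rw [h1, h2]
    simp [h3, h4]
  simp only [curvVec, gg, Finset.sum_apply, Pi.smul_apply, Pi.sub_apply, Pi.add_apply, Pi.neg_apply, smul_eq_mul,
    Fin.sum_univ_two, hPdPd, hPdC]
  ring

lemma met_entry_cont (T R : ℝ) (ψ : Fin 4 → ℝ → ℝ → ℝ) (hψ : ∀ α, Sm (ψ α))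
    (A B : Fin 2) (θ φ : ℝ) :
    Continuous (fun ε => met (Fpert T R ψ ε) A B θ φ) := by
  simp only [met_poly T R ψ hψ A B _ θ φ]
  fun_prop

lemma det_cont (T R : ℝ) (ψ : Fin 4 → ℝ → ℝ → ℝ) (hψ : ∀ α, Sm (ψ α)) (θ φ : ℝ) :
    Continuous (fun ε => (Matrix.of fun A B => met (Fpert T R ψ ε) A B θ φ).det) := by
  simp only [Matrix.det_fin_two, Matrix.of_apply]
  exact ((met_entry_cont T R ψ hψ 0 0 θ φ).mul (met_entry_cont T R ψ hψ 1 1 θ φ)).sub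
    ((met_entry_cont T R ψ hψ 0 1 θ φ).mul (met_entry_cont T R ψ hψ 1 0 θ φ))

lemma det_at_zero (T R : ℝ) (ψ : Fin 4 → ℝ → ℝ → ℝ) (hψ : ∀ α, Sm (ψ α)) (θ φ : ℝ) :
    (Matrix.of fun A B => met (Fpert T R ψ 0) A B θ φ).det = R ^ 4 * sin θ ^ 2 := by
  simp only [Matrix.det_fin_two, Matrix.of_apply, met_poly T R ψ hψ _ _ 0 θ φ,
    af00, af01, af10, af11]
  ring

lemma metInv_entry (F : ℝ → ℝ → Fin 4 → ℝ) (θ φ : ℝ) (A B : Fin 2) :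
    metInv F θ φ A B = ((Matrix.of fun A B => met F A B θ φ).det)⁻¹
      * (Matrix.of fun A B => met F A B θ φ).adjugate A B := by
  rw [metInv, Matrix.inv_def, Ring.inverse_eq_inv]
  simp [Matrix.smul_apply]

lemma metInv_cont (T R : ℝ) (ψ : Fin 4 → ℝ → ℝ → ℝ) (hψ : ∀ α, Sm (ψ α)) (hR : 0 < R)
    (θ φ : ℝ) (hs : 0 < sin θ) (A B : Fin 2) :
    ContinuousAt (fun ε => metInv (Fpert T R ψ ε) θ φ A B) 0 := by
  simp only [metInv_entry]
  have hne : (Matrix.of fun A B => met (Fpert T R ψ 0) A B θ φ).det ≠ 0 := by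
    rw [det_at_zero T R ψ hψ θ φ]
    positivity
  apply ContinuousAt.mul
  · exact ((det_cont T R ψ hψ θ φ).continuousAt).inv₀ hne
  · have hA : A = 0 ∨ A = 1 := by omega
    have hB : B = 0 ∨ B = 1 := by omega
    rcases hA with rfl | rfl <;> rcases hB with rfl | rfl <;>
      simp only [Matrix.adjugate_fin_two, Matrix.of_apply, Matrix.cons_val_zero,
        Matrix.cons_val_one, Matrix.head_cons, Matrix.head_fin_const] <;>
      first
      | exact (met_entry_cont T R ψ hψ _ _ θ φ).continuousAt
      | exact ((met_entry_cont T R ψ hψ _ _ θ φ).continuousAt).neg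

lemma christ_cont (T R : ℝ) (ψ : Fin 4 → ℝ → ℝ → ℝ) (hψ : ∀ α, Sm (ψ α)) (hR : 0 < R)
    (θ φ : ℝ) (hs : 0 < sin θ) (C A B : Fin 2) :
    ContinuousAt (fun ε => christoffel (Fpert T R ψ ε) C A B θ φ) 0 := by
  simp only [christoffel, Fin.sum_univ_two, pd_met T R ψ hψ]
  apply ContinuousAt.mul continuousAt_const
  apply ContinuousAt.add
  · exact (metInv_cont T R ψ hψ hR θ φ hs C 0).mul (by fun_prop)
  · exact (metInv_cont T R ψ hψ hR θ φ hs C 1).mul (by fun_prop)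

lemma gg_cont (T R : ℝ) (ψ : Fin 4 → ℝ → ℝ → ℝ) (hψ : ∀ α, Sm (ψ α)) (hR : 0 < R)
    (θ φ : ℝ) (hs : 0 < sin θ) :
    ContinuousAt (gg T R ψ θ φ) 0 := by
  have hmi := metInv_cont T R ψ hψ hR θ φ hs
  have hch := christ_cont T R ψ hψ hR θ φ hs
  show ContinuousAt (fun ε => gg T R ψ θ φ ε) 0
  simp only [gg, Fin.sum_univ_two]
  apply ContinuousAt.add
  apply ContinuousAt.add
  · exact (hmi 0 0).mul (continuousAt_const.sub (((hch 0 0 0).mul continuousAt_const).add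
      ((hch 1 0 0).mul continuousAt_const)))
  · exact (hmi 0 1).mul (continuousAt_const.sub (((hch 0 0 1).mul continuousAt_const).add
      ((hch 1 0 1).mul continuousAt_const)))
  · apply ContinuousAt.add
    · exact (hmi 1 0).mul (continuousAt_const.sub (((hch 0 1 0).mul continuousAt_const).add
        ((hch 1 1 0).mul continuousAt_const)))
    · exact (hmi 1 1).mul (continuousAt_const.sub (((hch 0 1 1).mul continuousAt_const).add
        ((hch 1 1 1).mul continuousAt_const)))

lemma deriv_gg (T R : ℝ) (ψ : Fin 4 → ℝ → ℝ → ℝ) (hψ : ∀ α, Sm (ψ α)) (hR : 0 < R)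
    (θ φ : ℝ) (hs : 0 < sin θ) :
    deriv (fun ε => curvVec (Fpert T R ψ ε) θ φ 0) 0 = gg T R ψ θ φ 0 := by
  rw [show (fun ε => curvVec (Fpert T R ψ ε) θ φ 0) = fun ε => ε * gg T R ψ θ φ ε
    from funext fun ε => curv_fact T R ψ hψ θ φ ε]
  have hd : HasDerivAt (fun ε => ε * gg T R ψ θ φ ε) (gg T R ψ θ φ 0) 0 := by
    rw [hasDerivAt_iff_tendsto_slope]
    have heq : gg T R ψ θ φ =ᶠ[nhdsWithin 0 {(0:ℝ)}ᶜ]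
        slope (fun ε => ε * gg T R ψ θ φ ε) 0 := by
      apply Filter.eventuallyEq_of_mem self_mem_nhdsWithin
      intro ε hε
      have hε' : ε ≠ 0 := hε
      simp [slope_def_field, hε']
    exact Filter.Tendsto.congr' heq
      ((gg_cont T R ψ hψ hR θ φ hs).tendsto.mono_left nhdsWithin_le_nhds)
  exact hd.deriv

lemma met0_mat (T R : ℝ) (ψ : Fin 4 → ℝ → ℝ → ℝ) (hψ : ∀ α, Sm (ψ α)) (θ φ : ℝ) :
    (Matrix.of fun A B => met (Fpert T R ψ 0) A B θ φ)
      = !![R ^ 2, 0; 0, R ^ 2 * sin θ ^ 2] := by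
  ext A B
  have hA : A = 0 ∨ A = 1 := by omega
  have hB : B = 0 ∨ B = 1 := by omega
  rcases hA with rfl | rfl <;> rcases hB with rfl | rfl <;>
    simp [Matrix.of_apply, met_poly T R ψ hψ _ _ 0 θ φ, af00, af01, af10, af11]

lemma metInv0 (T R : ℝ) (ψ : Fin 4 → ℝ → ℝ → ℝ) (hψ : ∀ α, Sm (ψ α)) (hR : 0 < R)
    (θ φ : ℝ) (hsin : 0 < sin θ) :
    metInv (Fpert T R ψ 0) θ φ = !![(R ^ 2)⁻¹, 0; 0, (R ^ 2 * sin θ ^ 2)⁻¹] := by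
  have hR' : R ≠ 0 := ne_of_gt hR
  have hsin' : sin θ ≠ 0 := ne_of_gt hsin
  rw [metInv, met0_mat T R ψ hψ θ φ, Matrix.inv_def, Matrix.adjugate_fin_two_of,
    Matrix.det_fin_two_of, Ring.inverse_eq_inv]
  ext A B
  have hA : A = 0 ∨ A = 1 := by omega
  have hB : B = 0 ∨ B = 1 := by omega
  rcases hA with rfl | rfl <;> rcases hB with rfl | rfl <;>
    simp [Matrix.smul_apply] <;> field_simp <;> ring

/-- Linearization of the time component of the curvature vector at a round sphere in
Minkowski spacetime: `d/dε|₀ H⁰(ε) = (1/R²) Δ̊ψ⁰`. -/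
theorem stmt11 (T R : ℝ) (hR : 0 < R)
    (ψ : Fin 4 → ℝ → ℝ → ℝ)
    (hψ : ∀ α : Fin 4, ContDiff ℝ (⊤ : ℕ∞) (fun p : ℝ × ℝ => ψ α p.1 p.2))
    (θ φ : ℝ) (hθ : θ ∈ Set.Ioo 0 π) :
    deriv (fun ε => curvVec (Fpert T R ψ ε) θ φ 0) 0
      = (1 / R ^ 2) * sphLap (ψ 0) θ φ := by
  have hs : ∀ α, Sm (ψ α) := hψ
  have hsin : 0 < sin θ := sin_pos_of_pos_of_lt_pi hθ.1 hθ.2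
  have hR' : R ≠ 0 := ne_of_gt hR
  have hsin' : sin θ ≠ 0 := ne_of_gt hsin
  rw [deriv_gg T R ψ hs hR θ φ hsin]
  simp only [gg, Fin.sum_univ_two, christoffel, pd_met T R ψ hs,
    metInv0 T R ψ hs hR θ φ hsin, pdaf00, pdaf01, pdaf10, pdaf11, pdaf11', sphLap,
    Matrix.cons_val_zero, Matrix.cons_val_one, Matrix.head_cons, Matrix.head_fin_const, Matrix.of_apply]
  field_simp
  ring
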